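/- Let k be an algebraically closed field and W a 4-dimensional k-vector space. Then every 2-dimensional linear subspace of the space of alternating bilinear forms on W contains a nonzero degenerate form, i.e., a nonzero alternating form with nonzero radical. -/

import Mathlib

set_option maxHeartbeats 1000000

open Polynomial

lemma aux_eval_det {k : Type*} [Field k]
    (M₁ M₂ : Matrix (Fin 4) (Fin 4) k) (t : k) :
    eval t (Matrix.det (M₁.map C + (X : k[X]) • M₂.map C)) = (M₁ + t • M₂).det := by
  rw [← Polynomial.coe_evalRingHom, RingHom.map_det]
  congr 1
  ext i j
  simp only [RingHom.mapMatrix_apply, Matrix.map_apply, Matrix.add_apply, Matrix.smul_apply, smul_eq_mul,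
    coe_evalRingHom, eval_add, eval_mul, eval_C, eval_X]

lemma aux_det_pencil {k : Type*} [Field k] [IsAlgClosed k]
    (M₁ M₂ : Matrix (Fin 4) (Fin 4) k) :
    ∃ a b : k, ¬(a = 0 ∧ b = 0) ∧ (a • M₁ + b • M₂).det = 0 := by
  by_cases h : ∃ t : k, (M₁ + t • M₂).det = 0
  · obtain ⟨t, ht⟩ := h
    exact ⟨1, t, fun h' => one_ne_zero h'.1, by simpa using ht⟩
  push_neg at h
  set p : k[X] := Matrix.det (M₁.map C + (X : k[X]) • M₂.map C) with hp
  have hev : ∀ t : k, eval t p = (M₁ + t • M₂).det := aux_eval_det M₁ M₂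
  -- p has no root, hence is a nonzero constant
  have hdeg : p.degree = 0 := by
    by_contra hd
    obtain ⟨t, ht⟩ := IsAlgClosed.exists_root p hd
    exact h t (by rw [← hev t]; exact ht)
  set c : k := p.coeff 0 with hc
  have hpc : p = C c := Polynomial.eq_C_of_degree_le_zero hdeg.le
  have hc0 : c ≠ 0 := by
    intro h0
    exact h 0 (by rw [← hev 0, hpc, h0]; simp)
  -- now show det M₂ = 0
  set q : k[X] := Matrix.det ((X : k[X]) • M₁.map C + M₂.map C) with hq
  have hevq : ∀ t : k, eval t q = (t • M₁ + M₂).det := by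
    intro t
    rw [hq, ← Polynomial.coe_evalRingHom, RingHom.map_det]
    congr 1
    ext i j
    simp only [RingHom.mapMatrix_apply, Matrix.map_apply, Matrix.add_apply, Matrix.smul_apply, smul_eq_mul,
      coe_evalRingHom, eval_add, eval_mul, eval_C, eval_X]
  have key : ∀ t : k, t ≠ 0 → eval t q = c * t ^ 4 := by
    intro t ht
    have : t • M₁ + M₂ = t • (M₁ + t⁻¹ • M₂) := by
      rw [smul_add, smul_smul, mul_inv_cancel₀ ht, one_smul]
    rw [hevq, this, Matrix.det_smul]
    have := hev t⁻¹
    rw [hpc, eval_C] at this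
    simp [← this, mul_comm]
  have hinf : ({x : k | x ≠ 0}).Infinite := by
    have : ({0}ᶜ : Set k).Infinite := (Set.finite_singleton (0 : k)).infinite_compl
    simpa [Set.compl_def] using this
  have hzero : q - C c * X ^ 4 = 0 := by
    apply Polynomial.eq_zero_of_infinite_isRoot
    apply hinf.mono
    intro t ht
    simp only [Set.mem_setOf_eq, IsRoot, eval_sub, eval_mul, eval_C, eval_pow, eval_X]
    rw [key t ht]
    ring
  have : eval 0 q = 0 := by
    rw [sub_eq_zero] at hzero
    rw [hzero]; simp
  refine ⟨0, 1, fun h' => one_ne_zero h'.2, ?_⟩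
  rw [hevq 0] at this
  simpa using this

theorem pencil_of_skew_forms_contains_degenerate
    (k : Type*) [Field k] [IsAlgClosed k]
    (W : Type*) [AddCommGroup W] [Module k W] [FiniteDimensional k W]
    (hW : Module.finrank k W = 4)
    (L : Submodule k (W →ₗ[k] W →ₗ[k] k))
    (hL : Module.finrank k L = 2)
    (halt : ∀ ω ∈ L, ∀ v : W, ω v v = 0) :
    ∃ ω ∈ L, ω ≠ 0 ∧ LinearMap.ker ω ≠ ⊥ := by
  classical
  obtain ⟨b⟩ : Nonempty (Module.Basis (Fin 4) k W) := ⟨Module.finBasisOfFinrankEq k W hW⟩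
  letI : AddCommGroup (W →ₗ[k] W →ₗ[k] k) := LinearMap.addCommGroup
  haveI : FiniteDimensional k L := Module.finite_of_finrank_eq_succ hL
  haveI : Module.Free k L := Module.Free.of_divisionRing k L
  obtain ⟨bL⟩ : Nonempty (Module.Basis (Fin 2) k L) := ⟨Module.finBasisOfFinrankEq k L hL⟩
  set ω₁ : W →ₗ[k] W →ₗ[k] k := ↑(bL 0) with hω₁
  set ω₂ : W →ₗ[k] W →ₗ[k] k := ↑(bL 1) with hω₂
  obtain ⟨a, c, hab, hdet⟩ := aux_det_pencil
    (LinearMap.toMatrix₂ b b ω₁) (LinearMap.toMatrix₂ b b ω₂)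
  refine ⟨a • ω₁ + c • ω₂, ?_, ?_, ?_⟩
  · exact L.add_mem (L.smul_mem a (bL 0).2) (L.smul_mem c (bL 1).2)
  · intro h0
    have h0' : a • (bL 0) + c • (bL 1) = 0 := by
      apply Subtype.coe_injective
      simp only [Submodule.coe_add, SetLike.val_smul, ZeroMemClass.coe_zero]
      exact h0
    have ha : a = 0 := by
      have h := congrArg (fun z => bL.repr z 0) h0'
      simp only [map_add bL.repr, map_smul bL.repr, Module.Basis.repr_self, Finsupp.coe_add, Finsupp.coe_smul,
        Pi.add_apply, Pi.smul_apply, smul_eq_mul, bL.repr.map_zero, Finsupp.coe_zero, Pi.zero_apply,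
        Finsupp.single_eq_same, Finsupp.single_eq_of_ne (by decide : (0 : Fin 2) ≠ 1),
        mul_one, mul_zero, add_zero, zero_add] at h
      exact h
    have hcz : c = 0 := by
      have h := congrArg (fun z => bL.repr z 1) h0'
      simp only [map_add bL.repr, map_smul bL.repr, Module.Basis.repr_self, Finsupp.coe_add, Finsupp.coe_smul,
        Pi.add_apply, Pi.smul_apply, smul_eq_mul, bL.repr.map_zero, Finsupp.coe_zero, Pi.zero_apply,
        Finsupp.single_eq_same, Finsupp.single_eq_of_ne (by decide : (1 : Fin 2) ≠ 0),
        mul_one, mul_zero, add_zero, zero_add] at h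
      exact h
    exact hab ⟨ha, hcz⟩
  · intro hker
    have hsep : LinearMap.SeparatingLeft (a • ω₁ + c • ω₂) :=
      LinearMap.separatingLeft_iff_ker_eq_bot.mpr hker
    rw [LinearMap.separatingLeft_iff_det_ne_zero b] at hsep
    apply hsep
    rw [map_add, map_smul, map_smul]
    exact hdet
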